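/- arXiv:2404.08568 — 3 statements merged into one kernel-verified Lean document; each statement's English description precedes it below -/
import Mathlib

section
/- Let f : C → C' be a homotopy τ-equivariant chain homotopy equivalence between τ-complexes, with homotopy τ-equivariant homotopy inverse g, such that the homotopies g∘f ≃ 1 and f∘g ≃ 1 are coherent. Then the induced map f_τ : C_τ → C'_τ is a chain homotopy equivalence with homotopy inverse g_τ. -/
/- Ungraded model of chain complexes over a ring of characteristic 2:
a module with a differential `d` (`d ∘ d = 0`) and a chain involution `τ`.
`coneD d τ` is the differential `[[d,0],[1+τ,d]]` of `Cone(1+τ)` on `C ⊕ C[1]`,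
and `coneMap f hf = [[f,0],[hf,f]]` is the induced map between cones. -/

def coneD {R C : Type*} [CommRing R] [AddCommGroup C] [Module R C]
    (d τ : C →ₗ[R] C) : C × C →ₗ[R] C × C :=
  LinearMap.prod (d ∘ₗ LinearMap.fst R C C)
    ((LinearMap.id + τ) ∘ₗ LinearMap.fst R C C + d ∘ₗ LinearMap.snd R C C)

def coneMap {R C C' : Type*} [CommRing R] [AddCommGroup C] [Module R C]
    [AddCommGroup C'] [Module R C'] (f hf : C →ₗ[R] C') : C × C →ₗ[R] C' × C' :=
  LinearMap.prod (f ∘ₗ LinearMap.fst R C C)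
    (hf ∘ₗ LinearMap.fst R C C + f ∘ₗ LinearMap.snd R C C)

lemma cone_htpy_aux {R : Type*} [CommRing R] (h2 : (2 : R) = 0)
    {C C' : Type*} [AddCommGroup C] [Module R C] [AddCommGroup C'] [Module R C']
    (d : C →ₗ[R] C) (τ : C →ₗ[R] C)
    (f : C →ₗ[R] C') (g : C' →ₗ[R] C) (hF : C →ₗ[R] C') (hG : C' →ₗ[R] C)
    (H K : C →ₗ[R] C)
    (hH : g ∘ₗ f + LinearMap.id = d ∘ₗ H + H ∘ₗ d)
    (hK : (τ ∘ₗ H + H ∘ₗ τ) + (hG ∘ₗ f + g ∘ₗ hF) = d ∘ₗ K + K ∘ₗ d) :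
    coneMap g hG ∘ₗ coneMap f hF + LinearMap.id
      = coneD d τ ∘ₗ coneMap H K + coneMap H K ∘ₗ coneD d τ := by
  apply LinearMap.ext
  rintro ⟨x, y⟩
  have c2 : ∀ (M : Type _) [AddCommGroup M] [Module R M] (m : M), m + m = 0 := by
    intro M _ _ m; rw [← two_smul R m, h2, zero_smul]
  have e1 := LinearMap.congr_fun hH x
  have e2 := LinearMap.congr_fun hH y
  have e3 := LinearMap.congr_fun hK x
  simp only [LinearMap.add_apply, LinearMap.comp_apply, LinearMap.id_apply] at e1 e2 e3
  simp only [coneMap, coneD, LinearMap.add_apply, LinearMap.comp_apply,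
    LinearMap.prod_apply, Function.prod, LinearMap.fst_apply, LinearMap.snd_apply,
    LinearMap.id_apply, Prod.mk_add_mk, map_add]
  refine Prod.ext ?_ ?_
  · simpa using e1
  · skip
    have e4 : H x + H x = 0 := c2 C (H x)
    have h11 : (1:R) + 1 = 0 := by linear_combination h2
    linear_combination (norm := module) e2 + e3 - h2 • (H x + τ (H x) + H (τ x))


/-- if `f` is a homotopy τ-equivariant homotopy equivalence with
homotopy τ-equivariant homotopy inverse `g`, and the homotopies `g∘f ≃ 1`,
`f∘g ≃ 1` are coherent (the identity carrying the zero equivariance homotopy),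
then `f_τ : C_τ → C'_τ` is a chain homotopy equivalence with inverse `g_τ`. -/
theorem cone_induced_homotopy_equiv
    {R : Type*} [CommRing R] (h2 : (2 : R) = 0)
    {C C' : Type*} [AddCommGroup C] [Module R C] [AddCommGroup C'] [Module R C']
    (d : C →ₗ[R] C) (d' : C' →ₗ[R] C') (τ : C →ₗ[R] C) (τ' : C' →ₗ[R] C')
    (hdd : d ∘ₗ d = 0) (hdd' : d' ∘ₗ d' = 0)
    (hτ : τ ∘ₗ τ = LinearMap.id) (hτ' : τ' ∘ₗ τ' = LinearMap.id)
    (hdτ : d ∘ₗ τ = τ ∘ₗ d) (hdτ' : d' ∘ₗ τ' = τ' ∘ₗ d')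
    (f : C →ₗ[R] C') (hf : d' ∘ₗ f = f ∘ₗ d)
    (g : C' →ₗ[R] C) (hg : d ∘ₗ g = g ∘ₗ d')
    (hF : C →ₗ[R] C') (heqf : τ' ∘ₗ f + f ∘ₗ τ = d' ∘ₗ hF + hF ∘ₗ d)
    (hG : C' →ₗ[R] C) (heqg : τ ∘ₗ g + g ∘ₗ τ' = d ∘ₗ hG + hG ∘ₗ d')
    -- homotopies g∘f ≃ 1 and f∘g ≃ 1 :
    (H : C →ₗ[R] C) (hH : g ∘ₗ f + LinearMap.id = d ∘ₗ H + H ∘ₗ d)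
    (H' : C' →ₗ[R] C') (hH' : f ∘ₗ g + LinearMap.id = d' ∘ₗ H' + H' ∘ₗ d')
    -- coherence of these homotopies :
    (K : C →ₗ[R] C)
    (hK : (τ ∘ₗ H + H ∘ₗ τ) + (hG ∘ₗ f + g ∘ₗ hF) = d ∘ₗ K + K ∘ₗ d)
    (K' : C' →ₗ[R] C')
    (hK' : (τ' ∘ₗ H' + H' ∘ₗ τ') + (hF ∘ₗ g + f ∘ₗ hG) = d' ∘ₗ K' + K' ∘ₗ d') :
    (∃ P : C × C →ₗ[R] C × C,
        coneMap g hG ∘ₗ coneMap f hF + LinearMap.id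
          = coneD d τ ∘ₗ P + P ∘ₗ coneD d τ) ∧
    (∃ Q : C' × C' →ₗ[R] C' × C',
        coneMap f hF ∘ₗ coneMap g hG + LinearMap.id
          = coneD d' τ' ∘ₗ Q + Q ∘ₗ coneD d' τ') := by
  exact ⟨⟨coneMap H K, cone_htpy_aux h2 d τ f g hF hG H K hH hK⟩,
    ⟨coneMap H' K', cone_htpy_aux h2 d' τ' g f hG hF H' K' hH' hK'⟩⟩
end

section
/- Let C, C' be τ-complexes over F₂, and let z ∈ C, z' ∈ C' be τ-invariant cycles. Define C_τ = Cone(1+τ), C'_τ = Cone(1+τ), and C⊗_τ = Cone(1⊗1 + τ⊗τ : C⊗C' → C⊗C'). Suppose there are elements x, y ∈ C and x', y' ∈ C' such that (z, 0) is homologous to (x, y) in C_τ and (z', 0) is homologous to (x', y') in C'_τ. Then in C⊗_τ, the cycle (z⊗z', 0) is homologous to (x⊗x', x⊗y' + y⊗τx'). -/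
open TensorProduct

private lemma char2_nsmul {M : Type*} [AddCommGroup M] [Module (ZMod 2) M] (m : M) :
    (2 : ℕ) • m = 0 := by
  have h : ((2 : ℕ) : ZMod 2) • m = (2 : ℕ) • m := Nat.cast_smul_eq_nsmul _ _ _
  rw [← h, show ((2 : ℕ) : ZMod 2) = 0 by decide, zero_smul]

private lemma char2_zsmul {M : Type*} [AddCommGroup M] [Module (ZMod 2) M] (m : M) :
    (2 : ℤ) • m = 0 := by
  have h : ((2 : ℤ) : ZMod 2) • m = (2 : ℤ) • m := Int.cast_smul_eq_zsmul _ _ _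
  rw [← h, show ((2 : ℤ) : ZMod 2) = 0 by decide, zero_smul]

private lemma char2_add_self {M : Type*} [AddCommGroup M] [Module (ZMod 2) M] (m : M) :
    m + m = 0 := by
  have := char2_nsmul m
  rwa [two_nsmul] at this

private lemma char2_nsmul3 {M : Type*} [AddCommGroup M] [Module (ZMod 2) M] (m : M) :
    (3 : ℕ) • m = m := by
  rw [show (3 : ℕ) = 2 + 1 from rfl, add_nsmul, char2_nsmul, zero_add, one_nsmul]

private lemma char2_zsmul3 {M : Type*} [AddCommGroup M] [Module (ZMod 2) M] (m : M) :
    (3 : ℤ) • m = m := by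
  rw [show (3 : ℤ) = 2 + 1 by norm_num, add_smul, char2_zsmul, zero_add, one_smul]

private lemma char2_nsmul4 {M : Type*} [AddCommGroup M] [Module (ZMod 2) M] (m : M) :
    (4 : ℕ) • m = 0 := by
  rw [show (4 : ℕ) = 2 + 2 from rfl, add_nsmul, char2_nsmul, add_zero]

private lemma char2_zsmul4 {M : Type*} [AddCommGroup M] [Module (ZMod 2) M] (m : M) :
    (4 : ℤ) • m = 0 := by
  rw [show (4 : ℤ) = 2 + 2 by norm_num, add_smul, char2_zsmul, add_zero]

private lemma char2_neg {M : Type*} [AddCommGroup M] [Module (ZMod 2) M] (m : M) :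
    -m = m :=
  neg_eq_of_add_eq_zero_left (char2_add_self m)

/-- if `z, z'` are τ-invariant cycles and `(z,0) ∼ (x,y)` in
`C_τ`, `(z',0) ∼ (x',y')` in `C'_τ`, then in
`C⊗_τ = Cone(1⊗1 + τ⊗τ)` one has `(z⊗z', 0) ∼ (x⊗x', x⊗y' + y⊗τx')`. -/
theorem tensor_cone_homologous_one
    {C C' : Type*} [AddCommGroup C] [Module (ZMod 2) C]
    [AddCommGroup C'] [Module (ZMod 2) C']
    (d τ : C →ₗ[ZMod 2] C) (d' τ' : C' →ₗ[ZMod 2] C')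
    (hdd : d ∘ₗ d = 0) (hdd' : d' ∘ₗ d' = 0)
    (hτ : τ ∘ₗ τ = LinearMap.id) (hτ' : τ' ∘ₗ τ' = LinearMap.id)
    (hdτ : d ∘ₗ τ = τ ∘ₗ d) (hdτ' : d' ∘ₗ τ' = τ' ∘ₗ d')
    (z : C) (hz : d z = 0) (hzτ : τ z = z)
    (z' : C') (hz' : d' z' = 0) (hz'τ : τ' z' = z')
    (x y : C) (x' y' : C')
    (hxy : ∃ p : C × C, ((z, 0) : C × C) - (x, y) = coneD d τ p)
    (hxy' : ∃ p' : C' × C', ((z', 0) : C' × C') - (x', y') = coneD d' τ' p') :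
    ∃ q : (C ⊗[ZMod 2] C') × (C ⊗[ZMod 2] C'),
      ((z ⊗ₜ[ZMod 2] z', (0 : C ⊗[ZMod 2] C'))
          : (C ⊗[ZMod 2] C') × (C ⊗[ZMod 2] C'))
        - (x ⊗ₜ[ZMod 2] x', x ⊗ₜ[ZMod 2] y' + y ⊗ₜ[ZMod 2] (τ' x'))
        = coneD
            (TensorProduct.map d LinearMap.id + TensorProduct.map LinearMap.id d')
            (TensorProduct.map τ τ') q := by
  obtain ⟨⟨a, b⟩, hab⟩ := hxy
  obtain ⟨⟨a', b'⟩, hab'⟩ := hxy'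
  have h1 : z - x = d a := congrArg Prod.fst hab
  have h2 : (0 : C) - y = a + τ a + d b := by
    have := congrArg Prod.snd hab
    simpa [coneD, LinearMap.add_apply] using this
  have h1' : z' - x' = d' a' := congrArg Prod.fst hab'
  have h2' : (0 : C') - y' = a' + τ' a' + d' b' := by
    have := congrArg Prod.snd hab'
    simpa [coneD, LinearMap.add_apply] using this
  have hx : x = z + d a := by
    rw [sub_eq_iff_eq_add'] at h1
    rw [h1, add_assoc, char2_add_self, add_zero]
  have hy : y = a + τ a + d b := by
    rw [zero_sub, char2_neg] at h2; exact h2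
  have hx' : x' = z' + d' a' := by
    rw [sub_eq_iff_eq_add'] at h1'
    rw [h1', add_assoc, char2_add_self, add_zero]
  have hy' : y' = a' + τ' a' + d' b' := by
    rw [zero_sub, char2_neg] at h2'; exact h2'
  subst hx hy hx' hy'
  have hdda : ∀ m : C, d (d m) = 0 := fun m => LinearMap.congr_fun hdd m
  have hdda' : ∀ m : C', d' (d' m) = 0 := fun m => LinearMap.congr_fun hdd' m
  have hττ : ∀ m : C, τ (τ m) = m := fun m => LinearMap.congr_fun hτ m
  have hττ' : ∀ m : C', τ' (τ' m) = m := fun m => LinearMap.congr_fun hτ' m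
  have hdτa : ∀ m : C, d (τ m) = τ (d m) := fun m => LinearMap.congr_fun hdτ m
  have hdτa' : ∀ m : C', d' (τ' m) = τ' (d' m) := fun m => LinearMap.congr_fun hdτ' m
  refine ⟨((z + d a) ⊗ₜ a' + a ⊗ₜ (z' + d' a') + a ⊗ₜ d' a',
      (z + d a) ⊗ₜ b' + b ⊗ₜ τ' (z' + d' a') + (a + τ a) ⊗ₜ τ' a'), ?_⟩
  refine Prod.ext ?_ ?_
  · simp only [coneD, LinearMap.prod_apply, LinearMap.coe_comp, Function.comp_apply,
      LinearMap.fst_apply, LinearMap.snd_apply, LinearMap.add_apply, LinearMap.id_apply,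
      Function.prod_apply, Prod.fst_sub, Prod.fst_add, Prod.snd_add, map_add, TensorProduct.map_tmul,
      tmul_add, add_tmul, hz, hz', hzτ, hz'τ, hdda, hdda', hττ, hττ', hdτa, hdτa',
      map_zero, zero_tmul, tmul_zero, sub_eq_add_neg, char2_neg]
    abel_nf
    simp only [char2_nsmul, char2_zsmul, char2_nsmul3, char2_zsmul3, char2_nsmul4, char2_zsmul4]
    try abel
  · simp only [coneD, LinearMap.prod_apply, LinearMap.coe_comp, Function.comp_apply,
      LinearMap.fst_apply, LinearMap.snd_apply, LinearMap.add_apply, LinearMap.id_apply,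
      Function.prod_apply, Prod.snd_sub, Prod.fst_add, Prod.snd_add, map_add, TensorProduct.map_tmul,
      tmul_add, add_tmul, hz, hz', hzτ, hz'τ, hdda, hdda', hττ, hττ', hdτa, hdτa',
      map_zero, zero_tmul, tmul_zero, sub_eq_add_neg, char2_neg]
    abel_nf
    simp only [char2_nsmul, char2_zsmul, char2_nsmul3, char2_zsmul3, char2_nsmul4, char2_zsmul4]
    try abel
end

section
/- Let R be a PID, h ∈ R prime, and let M be a finitely generated R-module with M/Tor free. Suppose α, β ∈ M are elements and there exist u, v ∈ M with α = h^{d} u + t₁ and α + β = h^{d+1} v + t₂ for torsion elements t₁, t₂, where u generates a free rank-1 direct summand of M/Tor and (u, v) extends to a basis of M/Tor. If additionally β = σ(α) for an involution σ of M fixing Tor and acting on M/Tor, then d_h(α mod Tor) = d_h(β mod Tor) = d and d_h((α+β) mod Tor) = d + 1, where d_h denotes h-divisibility in the free module M/Tor. -/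
/-- The `h`-divisibility of an element `z` of a module `N`:
`d_h(z) = max { k | z ∈ h^k N }` (as `sSup` of a set of naturals). -/
noncomputable def dh {R N : Type*} [CommRing R] [AddCommGroup N] [Module R N]
    (h : R) (z : N) : ℕ :=
  sSup {k : ℕ | ∃ u : N, z = h ^ k • u}

lemma dh_eq_of {R N : Type*} [CommRing R] [AddCommGroup N] [Module R N]
    (h : R) (e : ℕ) (z : N) (hmem : ∃ w : N, z = h ^ e • w)
    (hle : ∀ k : ℕ, (∃ w : N, z = h ^ k • w) → k ≤ e) : dh h z = e := by
  unfold dh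
  refine le_antisymm (csSup_le ⟨e, hmem⟩ hle) (le_csSup ⟨e, fun k hk => hle k hk⟩ hmem)

/-- let `R` be a PID, `h` prime, `M` finitely generated with
`M/Tor` free. Suppose `α = h^d u + t₁` and `α + β = h^{d+1} v + t₂` with
`t₁, t₂` torsion, where the images of `u, v` in `M/Tor` are part of a basis,
and `β = σ(α)` for an involution `σ` of `M` preserving the torsion submodule.
Then `d_h(ᾱ) = d_h(β̄) = d` and `d_h(ᾱ + β̄) = d + 1` in `M/Tor`. -/
theorem dh_lee_classes
    {R M : Type*} [CommRing R] [IsDomain R] [IsPrincipalIdealRing R]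
    [AddCommGroup M] [Module R M] [Module.Finite R M]
    [Module.Free R (M ⧸ Submodule.torsion R M)]
    (h : R) (hh : Prime h)
    (α β : M) (d : ℕ) (u v : M) (t₁ t₂ : M)
    (ht₁ : t₁ ∈ Submodule.torsion R M) (ht₂ : t₂ ∈ Submodule.torsion R M)
    (hα : α = h ^ d • u + t₁)
    (hαβ : α + β = h ^ (d + 1) • v + t₂)
    (hbasis : ∃ (ι : Type) (b : Module.Basis ι R (M ⧸ Submodule.torsion R M)) (i j : ι),
        i ≠ j ∧ b i = Submodule.mkQ (Submodule.torsion R M) u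
          ∧ b j = Submodule.mkQ (Submodule.torsion R M) v)
    (σ : M →ₗ[R] M) (hσ2 : σ ∘ₗ σ = LinearMap.id)
    (hσt : ∀ t ∈ Submodule.torsion R M, σ t ∈ Submodule.torsion R M)
    (hβ : β = σ α) :
    dh h (Submodule.mkQ (Submodule.torsion R M) α) = d ∧
    dh h (Submodule.mkQ (Submodule.torsion R M) β) = d ∧
    dh h (Submodule.mkQ (Submodule.torsion R M) (α + β)) = d + 1 := by
  classical
  obtain ⟨ι, b, i, j, hij, hbi, hbj⟩ := hbasis
  set π := Submodule.mkQ (Submodule.torsion R M) with hπ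
  have hπt₁ : π t₁ = 0 := by
    rw [hπ, Submodule.mkQ_apply, Submodule.Quotient.mk_eq_zero]; exact ht₁
  have hπt₂ : π t₂ = 0 := by
    rw [hπ, Submodule.mkQ_apply, Submodule.Quotient.mk_eq_zero]; exact ht₂
  have hA : π α = h ^ d • b i := by
    rw [hα, map_add, map_smul, hπt₁, add_zero, hbi]
  have hAB : π (α + β) = h ^ (d + 1) • b j := by
    rw [hαβ, map_add, map_smul, hπt₂, add_zero, hbj]
  have hB : π β = h ^ d • (h • b j - b i) := by
    have h1 : π β = π (α + β) - π α := by rw [map_add]; abel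
    rw [h1, hA, hAB, smul_sub, smul_smul, ← pow_succ]
  -- coordinate facts
  have hrepA : b.repr (π α) i = h ^ d := by
    simp [hA, Module.Basis.repr_self]
  have hrepB : b.repr (π β) i = -(h ^ d) := by
    simp [hB, Module.Basis.repr_self, Finsupp.single_eq_of_ne' hij.symm, Finsupp.single_eq_same]
  have hrepAB : b.repr (π (α + β)) j = h ^ (d + 1) := by
    simp [hAB, Module.Basis.repr_self]
  have key : ∀ (z : M ⧸ Submodule.torsion R M) (l : ι) (k : ℕ),
      (∃ w, z = h ^ k • w) → h ^ k ∣ b.repr z l := by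
    rintro z l k ⟨w, rfl⟩
    refine ⟨b.repr w l, ?_⟩
    simp [Finsupp.smul_apply]
  have bound : ∀ (z : M ⧸ Submodule.torsion R M) (l : ι) (e : ℕ),
      b.repr z l = h ^ e ∨ b.repr z l = -(h ^ e) →
      ∀ k : ℕ, (∃ w, z = h ^ k • w) → k ≤ e := by
    intro z l e hz k hk
    have hdvd : h ^ k ∣ h ^ e := by
      rcases hz with hz | hz
      · rw [← hz]; exact key z l k hk
      · have := key z l k hk
        rw [hz] at this
        exact (dvd_neg).mp this
    exact (pow_dvd_pow_iff hh.ne_zero hh.not_unit).mp hdvd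
  refine ⟨?_, ?_, ?_⟩
  · exact dh_eq_of h d _ ⟨b i, hA⟩ (bound _ i d (Or.inl hrepA))
  · exact dh_eq_of h d _ ⟨h • b j - b i, hB⟩ (bound _ i d (Or.inr hrepB))
  · exact dh_eq_of h (d + 1) _ ⟨b j, hAB⟩ (bound _ j (d + 1) (Or.inl hrepAB))
end
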